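/- For any positive integers $m$ and $r$, the number of tuples $(i_1, \ldots, i_{2r}) \in [m]^{2r}$ in which every element of $[m]$ occurs an even (possibly zero) number of times is at most $C^r \cdot m^r \cdot r!$ for some absolute constant $C$. -/

import Mathlib

open Finset

namespace Stmt11

variable {m r : ℕ}

def fib (f : Fin (2*r) → Fin m) (a : Fin m) : Finset (Fin (2*r)) :=
  Finset.univ.filter fun j => f j = a

lemma mem_fib_iff {f : Fin (2*r) → Fin m} {a : Fin m} {j : Fin (2*r)} :
    j ∈ fib f a ↔ f j = a := by simp [fib]

lemma mem_fib_self (f : Fin (2*r) → Fin m) (j : Fin (2*r)) : j ∈ fib f (f j) :=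
  mem_fib_iff.mpr rfl

def flipN (t : ℕ) : ℕ := if t % 2 = 0 then t + 1 else t - 1

lemma flipN_lt {t c : ℕ} (h : t < c) (hc : Even c) : flipN t < c := by
  obtain ⟨k, hk⟩ := hc; unfold flipN; split <;> omega

lemma flipN_flipN (t : ℕ) : flipN (flipN t) = t := by
  unfold flipN; split_ifs <;> omega

lemma flipN_mod (t : ℕ) : flipN t % 2 = 0 ↔ ¬ t % 2 = 0 := by
  unfold flipN; split_ifs <;> omega

/-- index of `j` inside its fiber -/
def idxF (f : Fin (2*r) → Fin m) (a : Fin m) (j : Fin (2*r)) (hj : j ∈ fib f a) :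
    Fin (fib f a).card :=
  ((fib f a).orderIsoOfFin rfl).symm ⟨j, hj⟩

def partnerIn (f : Fin (2*r) → Fin m) (hf : ∀ a, Even (fib f a).card) (a : Fin m)
    (j : Fin (2*r)) (hj : j ∈ fib f a) : Fin (2*r) :=
  (((fib f a).orderIsoOfFin rfl) ⟨flipN (idxF f a j hj).val,
    flipN_lt (idxF f a j hj).isLt (hf a)⟩ : {x // x ∈ fib f a})

lemma partnerIn_mem (f : Fin (2*r) → Fin m) (hf : ∀ a, Even (fib f a).card) (a : Fin m)
    (j : Fin (2*r)) (hj : j ∈ fib f a) : partnerIn f hf a j hj ∈ fib f a :=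
  (((fib f a).orderIsoOfFin rfl) ⟨flipN (idxF f a j hj).val, _⟩).2

lemma idxF_partnerIn (f : Fin (2*r) → Fin m) (hf : ∀ a, Even (fib f a).card) (a : Fin m)
    (j : Fin (2*r)) (hj : j ∈ fib f a) :
    (idxF f a (partnerIn f hf a j hj) (partnerIn_mem f hf a j hj)).val
      = flipN (idxF f a j hj).val := by
  have h : (⟨partnerIn f hf a j hj, partnerIn_mem f hf a j hj⟩ : {x // x ∈ fib f a})
      = ((fib f a).orderIsoOfFin rfl) ⟨flipN (idxF f a j hj).val,
          flipN_lt (idxF f a j hj).isLt (hf a)⟩ := Subtype.ext rfl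
  unfold idxF
  rw [h, OrderIso.symm_apply_apply]
  rfl

lemma eq_of_idxF (f : Fin (2*r) → Fin m) (a : Fin m) {j j' : Fin (2*r)}
    (hj : j ∈ fib f a) (hj' : j' ∈ fib f a)
    (h : (idxF f a j hj).val = (idxF f a j' hj').val) : j = j' := by
  have := congrArg (fun t => (((fib f a).orderIsoOfFin rfl) t : Fin (2*r))) (Fin.ext h)
  simpa only [idxF, OrderIso.apply_symm_apply] using this

lemma partnerIn_partnerIn (f : Fin (2*r) → Fin m) (hf : ∀ a, Even (fib f a).card) (a : Fin m)
    (j : Fin (2*r)) (hj : j ∈ fib f a) :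
    partnerIn f hf a (partnerIn f hf a j hj) (partnerIn_mem f hf a j hj) = j := by
  apply eq_of_idxF f a (partnerIn_mem f hf a _ (partnerIn_mem f hf a j hj)) hj
  rw [idxF_partnerIn, idxF_partnerIn, flipN_flipN]

lemma partnerIn_congr (f : Fin (2*r) → Fin m) (hf : ∀ a, Even (fib f a).card) {a a' : Fin m}
    (h : a = a') (j : Fin (2*r)) (hj : j ∈ fib f a) (hj' : j ∈ fib f a') :
    partnerIn f hf a j hj = partnerIn f hf a' j hj' := by subst h; rfl

def partner (f : Fin (2*r) → Fin m) (hf : ∀ a, Even (fib f a).card) (j : Fin (2*r)) :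
    Fin (2*r) :=
  partnerIn f hf (f j) j (mem_fib_self f j)

lemma f_partner (f : Fin (2*r) → Fin m) (hf : ∀ a, Even (fib f a).card) (j : Fin (2*r)) :
    f (partner f hf j) = f j :=
  mem_fib_iff.mp (partnerIn_mem f hf (f j) j (mem_fib_self f j))

lemma partner_partner (f : Fin (2*r) → Fin m) (hf : ∀ a, Even (fib f a).card) (j : Fin (2*r)) :
    partner f hf (partner f hf j) = j := by
  have h : partner f hf (partner f hf j)
      = partnerIn f hf (f j) (partner f hf j) (mem_fib_iff.mpr (f_partner f hf j)) :=
    partnerIn_congr f hf (f_partner f hf j) (partner f hf j) _ _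
  exact h.trans (partnerIn_partnerIn f hf (f j) j (mem_fib_self f j))

def opener (f : Fin (2*r) → Fin m) (j : Fin (2*r)) : Prop :=
  (idxF f (f j) j (mem_fib_self f j)).val % 2 = 0

instance (f : Fin (2*r) → Fin m) : DecidablePred (opener f) := fun j =>
  inferInstanceAs (Decidable (_ = 0))

lemma idxF_congr (f : Fin (2*r) → Fin m) {a a' : Fin m} (h : a = a') (j : Fin (2*r))
    (hj : j ∈ fib f a) (hj' : j ∈ fib f a') :
    (idxF f a j hj).val = (idxF f a' j hj').val := by subst h; rfl

lemma opener_partner (f : Fin (2*r) → Fin m) (hf : ∀ a, Even (fib f a).card) (j : Fin (2*r)) :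
    opener f (partner f hf j) ↔ ¬ opener f j := by
  unfold opener
  rw [idxF_congr f (f_partner f hf j) (partner f hf j) _
    (mem_fib_iff.mpr (f_partner f hf j))]
  show (idxF f (f j) (partnerIn f hf (f j) j (mem_fib_self f j))
    (partnerIn_mem f hf (f j) j (mem_fib_self f j))).val % 2 = 0 ↔ _
  rw [idxF_congr f rfl _ _ (partnerIn_mem f hf (f j) j (mem_fib_self f j)),
    idxF_partnerIn]
  exact flipN_mod _

def Op (f : Fin (2*r) → Fin m) : Finset (Fin (2*r)) := Finset.univ.filter (opener f)

lemma card_Op (f : Fin (2*r) → Fin m) (hf : ∀ a, Even (fib f a).card) : (Op f).card = r := by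
  have hbij : (Op f).card = (Finset.univ.filter fun j => ¬ opener f j).card := by
    apply Finset.card_bij' (fun j _ => partner f hf j) (fun j _ => partner f hf j)
    · intro a ha
      simp only [Op, mem_filter, mem_univ, true_and] at ha ⊢
      exact fun h => (opener_partner f hf a).mp h ha
    · intro a ha
      simp only [Op, mem_filter, mem_univ, true_and] at ha ⊢
      exact (opener_partner f hf a).mpr ha
    · intro a _; exact partner_partner f hf a
    · intro a _; exact partner_partner f hf a
  have htot : (Op f).card + (Finset.univ.filter fun j => ¬ opener f j).card = 2 * r := by
    have := Finset.card_filter_add_card_filter_not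
      (s := (Finset.univ : Finset (Fin (2*r)))) (opener f)
    rwa [Finset.card_univ, Fintype.card_fin] at this
  omega

lemma mem_Op_iff {f : Fin (2*r) → Fin m} {j : Fin (2*r)} : j ∈ Op f ↔ opener f j := by
  simp [Op]

lemma orderIsoOfFin_congr {s t : Finset (Fin (2*r))} (hst : s = t) {k : ℕ}
    (h : s.card = k) (h' : t.card = k) (i : Fin k) :
    ((s.orderIsoOfFin h) i : Fin (2*r)) = ((t.orderIsoOfFin h') i : Fin (2*r)) := by
  subst hst; rfl

/-- the encoding map -/
def enc (F : {f : Fin (2*r) → Fin m //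
    ∀ a : Fin m, Even ((Finset.univ.filter fun j => f j = a).card)}) :
    (Fin r → Fin (2*r)) × (Fin r → Fin m) :=
  (fun i => partner F.1 F.2 ((Op F.1).orderIsoOfFin (card_Op F.1 F.2) i),
   fun i => F.1 ((Op F.1).orderIsoOfFin (card_Op F.1 F.2) i))

lemma closers_eq_image (f : Fin (2*r) → Fin m) (hf : ∀ a, Even (fib f a).card) :
    (Finset.univ.filter fun j => ¬ opener f j)
      = Finset.image (fun i => partner f hf
          (((Op f).orderIsoOfFin (card_Op f hf)) i : Fin (2*r))) Finset.univ := by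
  ext j
  simp only [mem_filter, mem_univ, true_and, mem_image]
  constructor
  · intro hj
    have hmem : partner f hf j ∈ Op f := mem_Op_iff.mpr ((opener_partner f hf j).mpr hj)
    refine ⟨((Op f).orderIsoOfFin (card_Op f hf)).symm ⟨partner f hf j, hmem⟩, ?_⟩
    rw [show ((((Op f).orderIsoOfFin (card_Op f hf))
        ((((Op f).orderIsoOfFin (card_Op f hf))).symm ⟨partner f hf j, hmem⟩)) : Fin (2*r))
        = partner f hf j by rw [OrderIso.apply_symm_apply]]
    exact partner_partner f hf j
  · rintro ⟨i, rfl⟩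
    have hop : opener f (((Op f).orderIsoOfFin (card_Op f hf)) i : Fin (2*r)) :=
      mem_Op_iff.mp (((Op f).orderIsoOfFin (card_Op f hf)) i).2
    intro hcon
    have := (opener_partner f hf _).mp hcon
    exact this hop

lemma enc_injective : Function.Injective
    (enc : {f : Fin (2*r) → Fin m //
      ∀ a : Fin m, Even ((Finset.univ.filter fun j => f j = a).card)} → _) := by
  rintro ⟨f, hf⟩ ⟨g, hg⟩ h
  have hc : ∀ i, partner f hf (((Op f).orderIsoOfFin (card_Op f hf)) i : Fin (2*r))
      = partner g hg (((Op g).orderIsoOfFin (card_Op g hg)) i : Fin (2*r)) :=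
    fun i => congrFun (congrArg Prod.fst h) i
  have hv : ∀ i, f (((Op f).orderIsoOfFin (card_Op f hf)) i : Fin (2*r))
      = g (((Op g).orderIsoOfFin (card_Op g hg)) i : Fin (2*r)) :=
    fun i => congrFun (congrArg Prod.snd h) i
  have hcl : (Finset.univ.filter fun j => ¬ opener f j)
      = (Finset.univ.filter fun j => ¬ opener g j) := by
    rw [closers_eq_image f hf, closers_eq_image g hg]
    exact Finset.image_congr (fun i _ => hc i)
  have hOp : Op f = Op g := by
    ext j
    have h1 := Finset.ext_iff.mp hcl j
    simp only [mem_filter, mem_univ, true_and] at h1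
    simp only [mem_Op_iff]
    constructor
    · intro hj; by_contra hj'; exact (h1.mpr hj') hj
    · intro hj; by_contra hj'; exact (h1.mp hj') hj
  apply Subtype.ext
  funext j
  show f j = g j
  by_cases hj : j ∈ (Finset.univ.filter fun j => ¬ opener f j)
  · rw [closers_eq_image f hf] at hj
    obtain ⟨i, _, hi⟩ := Finset.mem_image.mp hj
    have hfj : f j = f (((Op f).orderIsoOfFin (card_Op f hf)) i : Fin (2*r)) := by
      rw [← hi]; exact f_partner f hf _
    have hgj : g j = g (((Op g).orderIsoOfFin (card_Op g hg)) i : Fin (2*r)) := by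
      rw [← hi, hc i]; exact f_partner g hg _
    rw [hfj, hgj]; exact hv i
  · simp only [mem_filter, mem_univ, true_and, not_not] at hj
    have hjOp : j ∈ Op f := mem_Op_iff.mpr hj
    set i := ((Op f).orderIsoOfFin (card_Op f hf)).symm ⟨j, hjOp⟩ with hidef
    have h1 : (((Op f).orderIsoOfFin (card_Op f hf)) i : Fin (2*r)) = j := by
      rw [hidef, OrderIso.apply_symm_apply]
    have h2 : (((Op g).orderIsoOfFin (card_Op g hg)) i : Fin (2*r)) = j := by
      rw [← orderIsoOfFin_congr hOp (card_Op f hf) (card_Op g hg) i]; exact h1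
    rw [← h1, hv i, h2, h1]

lemma card_bound (m r : ℕ) :
    Nat.card {f : Fin (2*r) → Fin m //
      ∀ a : Fin m, Even ((Finset.univ.filter fun j => f j = a).card)}
      ≤ (2*r)^r * m^r := by
  have h := Nat.card_le_card_of_injective _ (enc_injective (m := m) (r := r))
  simpa [Nat.card_eq_fintype_card, Fintype.card_fun] using h

lemma pow_self_le (r : ℕ) : (r:ℝ)^r ≤ 3^r * r.factorial := by
  induction r with
  | zero => simp
  | succ n ih =>
    rcases Nat.eq_zero_or_pos n with h | h
    · subst h; norm_num
    have hn : (0:ℝ) < n := by exact_mod_cast h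
    have key : ((n:ℝ)+1)^n ≤ 3 * (n:ℝ)^n := by
      have h1 : ((n:ℝ)+1) ≤ (n:ℝ) * Real.exp (1/n) := by
        have he := Real.add_one_le_exp (1/(n:ℝ))
        have : (n:ℝ) * (1/n + 1) ≤ (n:ℝ) * Real.exp (1/n) :=
          mul_le_mul_of_nonneg_left he (le_of_lt hn)
        calc ((n:ℝ)+1) = n * (1/n + 1) := by field_simp; ring
        _ ≤ (n:ℝ) * Real.exp (1/n) := this
      have h2 : ((n:ℝ)+1)^n ≤ ((n:ℝ) * Real.exp (1/n))^n :=
        pow_le_pow_left₀ (by positivity) h1 n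
      have h3 : ((n:ℝ) * Real.exp (1/n))^n = (n:ℝ)^n * Real.exp 1 := by
        rw [mul_pow, ← Real.exp_nat_mul]
        congr 2
        field_simp
      have h4 : Real.exp 1 ≤ 3 := le_of_lt (lt_trans Real.exp_one_lt_d9 (by norm_num))
      have h5 : (0:ℝ) ≤ (n:ℝ)^n := by positivity
      calc ((n:ℝ)+1)^n ≤ (n:ℝ)^n * Real.exp 1 := h3 ▸ h2
      _ ≤ 3 * (n:ℝ)^n := by nlinarith
    have hfac : (0:ℝ) ≤ (n.factorial : ℝ) := by positivity
    have hstep : ((n:ℝ)+1)^(n+1) ≤ 3^(n+1) * ((n+1) * n.factorial) := by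
      calc ((n:ℝ)+1)^(n+1) = ((n:ℝ)+1)^n * ((n:ℝ)+1) := by ring
      _ ≤ (3 * (n:ℝ)^n) * ((n:ℝ)+1) := by nlinarith
      _ ≤ (3 * (3^n * n.factorial)) * ((n:ℝ)+1) := by nlinarith [pow_nonneg (by norm_num : (0:ℝ) ≤ 3) n]
      _ = 3^(n+1) * (((n:ℝ)+1) * n.factorial) := by ring
    push_cast [Nat.factorial_succ]
    push_cast at hstep
    linarith

end Stmt11

theorem stmt_11 : ∃ C : ℝ, 0 < C ∧ ∀ m r : ℕ, 0 < m → 0 < r →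
    (Nat.card {f : Fin (2 * r) → Fin m //
        ∀ a : Fin m, Even ((Finset.univ.filter fun j => f j = a).card)} : ℝ)
      ≤ C ^ r * m ^ r * r.factorial := by
  refine ⟨6, by norm_num, fun m r hm hr => ?_⟩
  have h1 : (Nat.card {f : Fin (2 * r) → Fin m //
      ∀ a : Fin m, Even ((Finset.univ.filter fun j => f j = a).card)} : ℝ)
      ≤ (((2*r)^r * m^r : ℕ) : ℝ) := by
    exact_mod_cast Stmt11.card_bound m r
  refine h1.trans ?_
  push_cast
  have h2 := Stmt11.pow_self_le r
  have h3 : ((2:ℝ) * r)^r ≤ 6^r * r.factorial := by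
    calc ((2:ℝ) * r)^r = 2^r * (r:ℝ)^r := mul_pow 2 (r:ℝ) r
    _ ≤ 2^r * (3^r * r.factorial) := by
        have : (0:ℝ) ≤ 2^r := by positivity
        nlinarith
    _ = 6^r * r.factorial := by rw [← mul_assoc, ← mul_pow]; norm_num
  have hm' : (0:ℝ) ≤ (m:ℝ)^r := by positivity
  calc ((2:ℝ)*r)^r * (m:ℝ)^r ≤ (6^r * r.factorial) * (m:ℝ)^r :=
    mul_le_mul_of_nonneg_right h3 hm'
  _ = 6^r * (m:ℝ)^r * r.factorial := by ring
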